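/- Let p \equiv 1 (mod 4) be prime, \lambda in F_p \ {0,1} a nonzero square, and t in F_p with t^2 = \lambda and t \ne \pm 1. Then the curve W_\lambda : y^2 = x^3 + 2(1+\lambda)x^2 + (1-\lambda)^2 x is isomorphic over F_p to the Legendre curve E_\psi : y^2 = x(x-1)(x-\psi) with \psi = ((1-t)/(1+t))^2, via the change of variables (x,y) -> (u^2 x, u^3 y) with u^2 = -(1+t)^2. -/

import Mathlib

/-- The Legendre curve `y² = x(x - 1)(x - λ)` in Weierstrass form. -/
def legendreCurve (K : Type*) [Field K] (lam : K) : WeierstrassCurve K :=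
  { a₁ := 0, a₂ := -(1 + lam), a₃ := 0, a₄ := lam, a₆ := 0 }

/-- The curve `y² = x³ + 2(1+λ)x² + (1-λ)²x`, which is 2-isogenous to the Legendre curve. -/
def isogenousCurve (K : Type*) [Field K] (lam : K) : WeierstrassCurve K :=
  { a₁ := 0, a₂ := 2 * (1 + lam), a₃ := 0, a₄ := (1 - lam) ^ 2, a₆ := 0 }

theorem stmt_16 (p : ℕ) [Fact p.Prime] (hp : p % 4 = 1) (lam : ZMod p)
    (h0 : lam ≠ 0) (h1 : lam ≠ 1) (t : ZMod p) (ht : t ^ 2 = lam)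
    (ht1 : t ≠ 1) (ht1' : t ≠ -1) (u : (ZMod p)ˣ) (hu : (u : ZMod p) ^ 2 = -(1 + t) ^ 2) :
    (⟨u, 0, 0, 0⟩ : WeierstrassCurve.VariableChange (ZMod p)) • isogenousCurve (ZMod p) lam =
      legendreCurve (ZMod p) (((1 - t) / (1 + t)) ^ 2) := by
  have hne : (1 : ZMod p) + t ≠ 0 := fun h => ht1' (by linear_combination h)
  have hun : (u : ZMod p) ≠ 0 := u.ne_zero
  subst lam
  ext <;>
    simp only [WeierstrassCurve.variableChange_a₁, WeierstrassCurve.variableChange_a₂,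
      WeierstrassCurve.variableChange_a₃, WeierstrassCurve.variableChange_a₄,
      WeierstrassCurve.variableChange_a₆, legendreCurve, isogenousCurve,
      Units.val_inv_eq_inv_val] <;>
    field_simp <;>
    first
      | linear_combination (2*(1+t^2))*hu
      | linear_combination ((1-t)^2*((1+t)^2-(u:ZMod p)^2))*hu
      | ring1
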